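/- Let ζ be an irrational real number with λ_1(ζ) < ∞. Then the set of positive integers k with λ_k(ζ) > 1 is finite. -/

import Mathlib

/-- Distance from a real number to the nearest integer. -/
noncomputable def distNearestInt (a : ℝ) : ℝ := |a - round a|

/-- `max_{1 ≤ j ≤ k} ‖ζ^j x‖` for a positive integer `x`. -/
noncomputable def maxDist (k : ℕ) (ζ : ℝ) (x : ℕ) : ℝ :=
  ⨆ j ∈ Finset.Icc 1 k, distNearestInt (ζ ^ j * x)

/-- The approximation constant `λ_k(ζ)`, as an extended real number in `[0,∞]`. -/
noncomputable def lambdaConst (k : ℕ) (ζ : ℝ) : EReal :=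
  sSup (insert (0 : EReal) {e : EReal | ∃ η : ℝ, e = (η : EReal) ∧
    {x : ℕ | 0 < x ∧ 0 < maxDist k ζ x ∧ maxDist k ζ x ≤ (x : ℝ) ^ (-η)}.Infinite})

/-- The uniform approximation constant `λ̂_k(ζ)`, as an extended real number in `[0,∞]`. -/
noncomputable def lambdaHatConst (k : ℕ) (ζ : ℝ) : EReal :=
  sSup (insert (0 : EReal) {e : EReal | ∃ η : ℝ, e = (η : EReal) ∧
    ∃ X₀ : ℝ, ∀ X : ℝ, X₀ ≤ X → ∃ x : ℕ, 1 ≤ x ∧ (x : ℝ) ≤ X ∧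
      0 < maxDist k ζ x ∧ maxDist k ζ x ≤ X ^ (-η)})

/-- The dual approximation constant `w_k(ζ)`, as an extended real number in `[0,∞]`. -/
noncomputable def wConst (k : ℕ) (ζ : ℝ) : EReal :=
  sSup (insert (0 : EReal) {e : EReal | ∃ ν : ℝ, e = (ν : EReal) ∧
    ∀ X₀ : ℝ, ∃ X : ℝ, X₀ ≤ X ∧ ∃ p : Fin (k + 1) → ℤ,
      (∀ j, |(p j : ℝ)| ≤ X) ∧
      0 < |∑ j : Fin (k + 1), ζ ^ (j : ℕ) * (p j : ℝ)| ∧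
      |∑ j : Fin (k + 1), ζ ^ (j : ℕ) * (p j : ℝ)| ≤ X ^ (-ν)})

/-- The uniform dual approximation constant `ŵ_k(ζ)`, as an extended real number in `[0,∞]`. -/
noncomputable def wHatConst (k : ℕ) (ζ : ℝ) : EReal :=
  sSup (insert (0 : EReal) {e : EReal | ∃ ν : ℝ, e = (ν : EReal) ∧
    ∃ X₀ : ℝ, ∀ X : ℝ, X₀ ≤ X → ∃ p : Fin (k + 1) → ℤ,
      (∀ j, |(p j : ℝ)| ≤ X) ∧
      0 < |∑ j : Fin (k + 1), ζ ^ (j : ℕ) * (p j : ℝ)| ∧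
      |∑ j : Fin (k + 1), ζ ^ (j : ℕ) * (p j : ℝ)| ≤ X ^ (-ν)})

lemma dni_nonneg (a : ℝ) : 0 ≤ distNearestInt a := abs_nonneg _

lemma dni_le_half (a : ℝ) : distNearestInt a ≤ 1/2 := abs_sub_round a

lemma dni_le (a : ℝ) (m : ℤ) : distNearestInt a ≤ |a - m| := round_le a m

lemma dni_pos {a : ℝ} (h : Irrational a) : 0 < distNearestInt a := by
  rw [distNearestInt, abs_pos, sub_ne_zero]; exact h.ne_int _

lemma le_maxDist {k j : ℕ} (ζ : ℝ) (x : ℕ) (hj : j ∈ Finset.Icc 1 k) :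
    distNearestInt (ζ ^ j * x) ≤ maxDist k ζ x := by
  have hb : ∀ i, ⨆ _ : i ∈ Finset.Icc 1 k, distNearestInt (ζ ^ i * x) ≤ 1/2 := by
    intro i
    apply Real.iSup_le (fun _ => dni_le_half _) (by norm_num)
  refine le_trans ?_ (le_ciSup ⟨1/2, ?_⟩ j)
  · exact le_ciSup_of_le (Set.Finite.bddAbove (Set.finite_range _)) hj le_rfl
  · rintro y ⟨i, rfl⟩; exact hb i

lemma maxDist_le {k : ℕ} {ζ : ℝ} {x : ℕ} {c : ℝ} (hc : 0 ≤ c)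
    (h : ∀ j ∈ Finset.Icc 1 k, distNearestInt (ζ ^ j * x) ≤ c) :
    maxDist k ζ x ≤ c := by
  apply Real.iSup_le _ hc
  intro j
  exact Real.iSup_le (fun hj => h j hj) hc

/-- Key lemma: a good simultaneous approximation `x` yields a small denominator `y ≤ x^{1/k}`
with a very good rational approximation to `ζ`. -/

lemma key_lemma (ζ : ℝ) (hirr : Irrational ζ) {k : ℕ} (hk : 1 ≤ k) {η : ℝ} (hη : 1 < η) :
    ∃ A : ℝ, ∀ x : ℕ, A ≤ (x : ℝ) → maxDist k ζ x ≤ (x : ℝ) ^ (-η) →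
      ∃ y : ℕ, 1 ≤ y ∧ ((y : ℝ)) ^ k ≤ (x : ℝ) ∧
        distNearestInt (ζ * y) ≤ (y : ℝ) * (x : ℝ) ^ (-η - 1) := by
  have hζ0 : (0:ℝ) < |ζ| := abs_pos.mpr hirr.ne_zero
  set C : ℝ := 2 + |ζ| + (1 + |ζ|) ^ k with hC
  have hCpos : 0 < C := by positivity
  refine ⟨max (max ((C + 1) ^ ((1:ℝ)/(η-1))) (2/|ζ|)) 1, ?_⟩
  intro x hAx hmd
  have hx1 : (1:ℝ) ≤ (x:ℝ) := le_trans (le_max_right _ _) hAx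
  have hx0 : (0:ℝ) < (x:ℝ) := lt_of_lt_of_le one_pos hx1
  have hxN : 1 ≤ x := by exact_mod_cast hx1
  set E : ℝ := (x:ℝ) ^ (-η) with hE
  have hE0 : 0 ≤ E := Real.rpow_nonneg hx0.le _
  have hE1 : E ≤ 1 := Real.rpow_le_one_of_one_le_of_nonpos hx1 (by linarith)
  -- C * x^(1-η) < 1
  have hxpow : C + 1 ≤ (x:ℝ) ^ (η - 1) := by
    have h1 : ((C + 1) ^ ((1:ℝ)/(η-1)) : ℝ) ≤ (x:ℝ) :=
      le_trans (le_max_left _ _) (le_trans (le_max_left _ _) hAx)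
    have h2 : (((C + 1) ^ ((1:ℝ)/(η-1)) : ℝ)) ^ (η - 1) ≤ (x:ℝ) ^ (η - 1) :=
      Real.rpow_le_rpow (Real.rpow_nonneg (by linarith) _) h1 (by linarith)
    rwa [← Real.rpow_mul (by linarith), one_div_mul_cancel (by linarith : η - 1 ≠ 0),
      Real.rpow_one] at h2
  have hCx : C * (x:ℝ) ^ ((1:ℝ) - η) < 1 := by
    have hpos : (0:ℝ) < (x:ℝ) ^ (η - 1) := Real.rpow_pos_of_pos hx0 _
    have : (x:ℝ) ^ ((1:ℝ) - η) = ((x:ℝ) ^ (η - 1))⁻¹ := by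
      rw [show (1:ℝ) - η = -(η - 1) by ring, Real.rpow_neg hx0.le]
    rw [this]
    rw [mul_inv_lt_iff₀ hpos, one_mul]
    linarith
  have hζx : 2 ≤ |ζ| * (x:ℝ) := by
    have h1 : 2/|ζ| ≤ (x:ℝ) := le_trans (le_max_right _ _) (le_trans (le_max_left _ _) hAx)
    calc (2:ℝ) = |ζ| * (2/|ζ|) := by field_simp
    _ ≤ |ζ| * x := by apply mul_le_mul_of_nonneg_left h1 hζ0.le
  set P : ℕ → ℤ := fun j => round (ζ ^ j * (x:ℝ)) with hP
  have hd : ∀ j ∈ Finset.Icc 1 k, |ζ ^ j * (x:ℝ) - (P j : ℝ)| ≤ E :=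
    fun j hj => le_trans (le_maxDist ζ x hj) hmd
  have h1k : 1 ∈ Finset.Icc 1 k := Finset.mem_Icc.mpr ⟨le_rfl, hk⟩
  have hd1 : |ζ * (x:ℝ) - (P 1 : ℝ)| ≤ E := by
    have := hd 1 h1k; rwa [pow_one] at this
  have hP1ne : P 1 ≠ 0 := by
    intro h0
    rw [h0] at hd1
    simp only [Int.cast_zero, sub_zero, abs_mul, abs_of_nonneg hx0.le] at hd1
    linarith
  -- bound on |P j|
  have hPb : ∀ j ∈ Finset.Icc 1 k, |(P j : ℝ)| ≤ ((1 + |ζ|) ^ k + 1) * (x:ℝ) := by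
    intro j hj
    obtain ⟨hj1, hjk⟩ := Finset.mem_Icc.mp hj
    have h1 : |(P j : ℝ)| ≤ |ζ ^ j * (x:ℝ)| + E := by
      have := hd j hj
      have habs := abs_sub_abs_le_abs_sub (ζ ^ j * (x:ℝ)) ((P j : ℝ))
      rw [abs_sub_comm] at this
      nlinarith [abs_sub_abs_le_abs_sub ((P j : ℝ)) (ζ ^ j * (x:ℝ))]
    have h2 : |ζ ^ j * (x:ℝ)| ≤ (1 + |ζ|) ^ k * (x:ℝ) := by
      rw [abs_mul, abs_pow, abs_of_nonneg hx0.le]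
      apply mul_le_mul_of_nonneg_right _ hx0.le
      calc |ζ| ^ j ≤ (1 + |ζ|) ^ j := pow_le_pow_left₀ (abs_nonneg _) (by linarith) j
      _ ≤ (1 + |ζ|) ^ k := pow_le_pow_right₀ (by linarith) hjk
    nlinarith
  -- Step A
  have hA : ∀ j, 2 ≤ j → j ≤ k → (x:ℤ) * P j = P 1 * P (j - 1) := by
    intro j h2j hjk
    have hjm : j - 1 ∈ Finset.Icc 1 k := Finset.mem_Icc.mpr ⟨by omega, by omega⟩
    have hjmem : j ∈ Finset.Icc 1 k := Finset.mem_Icc.mpr ⟨by omega, hjk⟩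
    have hz : ζ ^ j = ζ * ζ ^ (j - 1) := by
      conv_lhs => rw [show j = (j-1)+1 by omega]
      rw [pow_succ']
    have hcast : (((x:ℤ) * P j - P 1 * P (j - 1) : ℤ) : ℝ) =
        (x:ℝ) * ((P j : ℝ) - ζ ^ j * x) + (ζ * x) * (ζ ^ (j-1) * x - (P (j-1) : ℝ))
          + (P (j-1) : ℝ) * (ζ * x - (P 1 : ℝ)) := by
      push_cast
      rw [hz]; ring
    have hb1 : |(x:ℝ) * ((P j : ℝ) - ζ ^ j * x)| ≤ (x:ℝ) * E := by
      rw [abs_mul, abs_of_nonneg hx0.le, abs_sub_comm]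
      exact mul_le_mul_of_nonneg_left (hd j hjmem) hx0.le
    have hb2 : |(ζ * x) * (ζ ^ (j-1) * x - (P (j-1) : ℝ))| ≤ |ζ| * (x:ℝ) * E := by
      rw [abs_mul, abs_mul, abs_of_nonneg hx0.le]
      exact mul_le_mul_of_nonneg_left (hd (j-1) hjm) (by positivity)
    have hb3 : |(P (j-1) : ℝ) * (ζ * x - (P 1 : ℝ))| ≤ ((1 + |ζ|) ^ k + 1) * (x:ℝ) * E := by
      rw [abs_mul]
      exact mul_le_mul (hPb (j-1) hjm) hd1 (abs_nonneg _) (by positivity)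
    have hlt : |(((x:ℤ) * P j - P 1 * P (j - 1) : ℤ) : ℝ)| < 1 := by
      rw [hcast]
      have htri := abs_add_le ((x:ℝ) * ((P j : ℝ) - ζ ^ j * x) + (ζ * x) * (ζ ^ (j-1) * x - (P (j-1) : ℝ))) ((P (j-1) : ℝ) * (ζ * x - (P 1 : ℝ)))
      have htri2 := abs_add_le ((x:ℝ) * ((P j : ℝ) - ζ ^ j * x)) ((ζ * x) * (ζ ^ (j-1) * x - (P (j-1) : ℝ)))
      have hsum : |(x:ℝ) * ((P j : ℝ) - ζ ^ j * x) + (ζ * x) * (ζ ^ (j-1) * x - (P (j-1) : ℝ))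
          + (P (j-1) : ℝ) * (ζ * x - (P 1 : ℝ))| ≤ C * ((x:ℝ) * E) := by
        rw [hC]; nlinarith
      have hxE : (x:ℝ) * E = (x:ℝ) ^ ((1:ℝ) - η) := by
        rw [hE, show (1:ℝ) - η = 1 + (-η) by ring, Real.rpow_add hx0, Real.rpow_one]
      rw [hxE] at hsum
      linarith
    have : |((x:ℤ) * P j - P 1 * P (j - 1) : ℤ)| < 1 := by exact_mod_cast hlt
    have h0 : (x:ℤ) * P j - P 1 * P (j - 1) = 0 := Int.abs_lt_one_iff.mp this
    linarith [h0]
  -- Step B: P 1 ^ j = P j * x^(j-1)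
  have hB : ∀ j, 1 ≤ j → j ≤ k → P 1 ^ j = P j * (x:ℤ) ^ (j - 1) := by
    intro j hj
    induction j, hj using Nat.le_induction with
    | base => intro _; simp
    | succ n hn ih =>
      intro hnk
      have ihn := ih (by omega)
      have hAn := hA (n + 1) (by omega) hnk
      have hsimp : n + 1 - 1 = n := by omega
      rw [hsimp] at hAn ⊢
      have hxp : (x:ℤ) ^ (n - 1) * (x:ℤ) = (x:ℤ) ^ n := by
        rw [← pow_succ]; congr 1; omega
      calc P 1 ^ (n + 1) = P 1 * P 1 ^ n := by ring
      _ = P 1 * (P n * (x:ℤ) ^ (n-1)) := by rw [ihn]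
      _ = (P 1 * P n) * (x:ℤ) ^ (n-1) := by ring
      _ = ((x:ℤ) * P (n+1)) * (x:ℤ) ^ (n-1) := by rw [hAn]
      _ = P (n+1) * ((x:ℤ) ^ (n-1) * (x:ℤ)) := by ring
      _ = P (n+1) * (x:ℤ) ^ n := by rw [hxp]
  -- Step C: gcd argument
  set g : ℕ := Int.gcd (P 1) (x:ℤ) with hg
  have hgpos : 0 < g := Int.gcd_pos_iff.mpr (Or.inl hP1ne)
  have hgz : ((g:ℤ)) ≠ 0 := by exact_mod_cast hgpos.ne'
  set p' : ℤ := P 1 / (g:ℤ) with hp'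
  set y' : ℤ := (x:ℤ) / (g:ℤ) with hy'
  have hP1eq : (g:ℤ) * p' = P 1 := Int.mul_ediv_cancel' (Int.gcd_dvd_left _ _)
  have hxeq : (g:ℤ) * y' = (x:ℤ) := Int.mul_ediv_cancel' (Int.gcd_dvd_right _ _)
  have hy'pos : 0 < y' := by
    rcases lt_trichotomy y' 0 with h | h | h
    · nlinarith [hxeq, (by exact_mod_cast hgpos : (0:ℤ) < (g:ℤ)), (by exact_mod_cast hx0 : (0:ℤ) < (x:ℤ))]
    · exfalso; rw [h, mul_zero] at hxeq
      have : (0:ℤ) < (x:ℤ) := by exact_mod_cast hxN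
      omega
    · exact h
  have hcop : IsCoprime p' y' := by
    rw [Int.isCoprime_iff_gcd_eq_one]
    exact Int.gcd_div_gcd_div_gcd (by exact_mod_cast hgpos)
  have hBk := hB k hk le_rfl
  -- cancel g^(k-1)
  have hcancel : (g:ℤ) * p' ^ k = P k * y' ^ (k - 1) := by
    have hexp : (g:ℤ) ^ (k - 1) * ((g:ℤ) * p' ^ k) = (g:ℤ) ^ (k-1) * (P k * y' ^ (k - 1)) := by
      have hgk : (g:ℤ) ^ (k-1) * (g:ℤ) = (g:ℤ) ^ k := by
        rw [← pow_succ]; congr 1; omega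
      calc (g:ℤ) ^ (k - 1) * ((g:ℤ) * p' ^ k) = ((g:ℤ) ^ (k-1) * (g:ℤ)) * p' ^ k := by ring
      _ = (g:ℤ) ^ k * p' ^ k := by rw [hgk]
      _ = ((g:ℤ) * p') ^ k := by rw [mul_pow]
      _ = P 1 ^ k := by rw [hP1eq]
      _ = P k * (x:ℤ) ^ (k-1) := hBk
      _ = P k * ((g:ℤ) * y') ^ (k-1) := by rw [hxeq]
      _ = (g:ℤ) ^ (k-1) * (P k * y' ^ (k - 1)) := by rw [mul_pow]; ring
    exact mul_left_cancel₀ (pow_ne_zero _ hgz) hexp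
  have hdvd : y' ^ (k - 1) ∣ (g:ℤ) := by
    have h1 : y' ^ (k - 1) ∣ (g:ℤ) * p' ^ k := Dvd.intro (P k) (by linarith [hcancel])
    have h2 : IsCoprime (y' ^ (k-1)) (p' ^ k) := (hcop.symm.pow)
    exact h2.dvd_of_dvd_mul_right h1
  have hyg : y' ^ (k - 1) ≤ (g:ℤ) := Int.le_of_dvd (by exact_mod_cast hgpos) hdvd
  have hyx : y' ^ k ≤ (x:ℤ) := by
    have h1 : y' ^ (k-1) * y' ≤ (g:ℤ) * y' :=
      mul_le_mul_of_nonneg_right hyg hy'pos.le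
    have h2 : y' ^ (k-1) * y' = y' ^ k := by rw [← pow_succ]; congr 1; omega
    rw [h2, hxeq] at h1; exact h1
  -- Step D: define y and estimate
  refine ⟨y'.toNat, by omega, ?_, ?_⟩
  · have hyt : ((y'.toNat : ℤ)) = y' := Int.toNat_of_nonneg hy'pos.le
    have : ((y'.toNat : ℝ)) ^ k ≤ ((x:ℕ):ℝ) := by
      exact_mod_cast (by rw [hyt] ; exact_mod_cast hyx : ((y'.toNat:ℤ)) ^ k ≤ ((x:ℕ):ℤ))
    exact this
  · have hyt : ((y'.toNat : ℤ)) = y' := Int.toNat_of_nonneg hy'pos.le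
    have hyR : ((y'.toNat : ℝ)) = ((y':ℤ):ℝ) := by exact_mod_cast hyt
    have hgR : (0:ℝ) < (g:ℝ) := by exact_mod_cast hgpos
    have hxeqR : (g:ℝ) * ((y':ℤ):ℝ) = (x:ℝ) := by exact_mod_cast hxeq
    have hP1R : (g:ℝ) * ((p':ℤ):ℝ) = ((P 1 : ℤ):ℝ) := by exact_mod_cast hP1eq
    have hdiff : ζ * ((y':ℤ):ℝ) - ((p':ℤ):ℝ) = (ζ * (x:ℝ) - ((P 1:ℤ):ℝ)) / (g:ℝ) := by
      rw [← hxeqR, ← hP1R]; field_simp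
    have hstep : |ζ * ((y':ℤ):ℝ) - ((p':ℤ):ℝ)| ≤ E / (g:ℝ) := by
      rw [hdiff, abs_div, abs_of_nonneg hgR.le]
      exact div_le_div_of_nonneg_right hd1 hgR.le
    -- E / g = y' * x^(-η-1)
    have hgy : (g:ℝ) = (x:ℝ) / ((y':ℤ):ℝ) := by
      have hy'R : (0:ℝ) < ((y':ℤ):ℝ) := by exact_mod_cast hy'pos
      field_simp [← hxeqR]; exact hxeqR
    -- thus E / g = y' * x^(-η) / x ≤ y' * x^(-η-1)
    have hy'R : (0:ℝ) < ((y':ℤ):ℝ) := by exact_mod_cast hy'pos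
    have hEg : E / (g:ℝ) = ((y':ℤ):ℝ) * (x:ℝ) ^ (-η - 1) := by
      rw [hgy, div_div_eq_mul_div, show (-η - 1) = (-η) + (-1) by ring,
        Real.rpow_add hx0, Real.rpow_neg_one]
      field_simp [hE]
      ring
    rw [hyR]
    calc distNearestInt (ζ * ((y':ℤ):ℝ)) ≤ |ζ * ((y':ℤ):ℝ) - ((p':ℤ):ℝ)| := dni_le _ p'
    _ ≤ E / (g:ℝ) := hstep
    _ = ((y':ℤ):ℝ) * (x:ℝ) ^ (-η - 1) := hEg

lemma infinite_good (ζ : ℝ) (hirr : Irrational ζ) {k : ℕ} (hk : 1 ≤ k) {η : ℝ} (hη : 1 < η)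
    (hT : {x : ℕ | 0 < x ∧ 0 < maxDist k ζ x ∧ maxDist k ζ x ≤ (x : ℝ) ^ (-η)}.Infinite) :
    {y : ℕ | 0 < y ∧ 0 < maxDist 1 ζ y ∧
      maxDist 1 ζ y ≤ (y : ℝ) ^ (-(2*(k:ℝ)-1))}.Infinite := by
  obtain ⟨A, hA⟩ := key_lemma ζ hirr hk hη
  set T := {x : ℕ | 0 < x ∧ 0 < maxDist k ζ x ∧ maxDist k ζ x ≤ (x : ℝ) ^ (-η)} with hTdef
  set S' := {y : ℕ | 0 < y ∧ 0 < maxDist 1 ζ y ∧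
      maxDist 1 ζ y ≤ (y : ℝ) ^ (-(2*(k:ℝ)-1))} with hS'def
  -- membership criterion
  have hmem : ∀ x : ℕ, (1:ℝ) ≤ (x:ℝ) → ∀ y : ℕ, 1 ≤ y → ((y:ℝ)) ^ k ≤ (x:ℝ) →
      distNearestInt (ζ * y) ≤ (y : ℝ) * (x : ℝ) ^ (-η - 1) → y ∈ S' := by
    intro x hx1 y hy1 hyk hyd
    have hy0 : (0:ℝ) < (y:ℝ) := by exact_mod_cast hy1
    have hy1R : (1:ℝ) ≤ (y:ℝ) := by exact_mod_cast hy1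
    have hx0 : (0:ℝ) < (x:ℝ) := lt_of_lt_of_le one_pos hx1
    have hirry : Irrational (ζ * y) := hirr.mul_natCast (by omega)
    have hykpos : (0:ℝ) < ((y:ℝ)) ^ k := by positivity
    have hb1 : (x:ℝ) ^ (-η - 1) ≤ (((y:ℝ)) ^ k) ^ (-η - 1) :=
      Real.rpow_le_rpow_of_nonpos hykpos hyk (by linarith)
    have hb2 : (((y:ℝ)) ^ k) ^ (-η - 1) = (y:ℝ) ^ ((k:ℝ) * (-η - 1)) := by
      rw [← Real.rpow_natCast (y:ℝ) k, ← Real.rpow_mul hy0.le]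
    have hb3 : (y:ℝ) * (y:ℝ) ^ ((k:ℝ) * (-η - 1)) = (y:ℝ) ^ (1 + (k:ℝ) * (-η - 1)) := by
      rw [Real.rpow_add hy0, Real.rpow_one]
    have hb4 : (y:ℝ) ^ (1 + (k:ℝ) * (-η - 1)) ≤ (y:ℝ) ^ (-(2*(k:ℝ)-1)) := by
      apply Real.rpow_le_rpow_of_exponent_le hy1R
      have hkR : (1:ℝ) ≤ (k:ℝ) := by exact_mod_cast hk
      nlinarith
    have hd : distNearestInt (ζ * y) ≤ (y:ℝ) ^ (-(2*(k:ℝ)-1)) := by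
      calc distNearestInt (ζ * y) ≤ (y : ℝ) * (x : ℝ) ^ (-η - 1) := hyd
      _ ≤ (y:ℝ) * (((y:ℝ)) ^ k) ^ (-η - 1) := by
          exact mul_le_mul_of_nonneg_left hb1 hy0.le
      _ = (y:ℝ) ^ (1 + (k:ℝ) * (-η - 1)) := by rw [hb2, hb3]
      _ ≤ (y:ℝ) ^ (-(2*(k:ℝ)-1)) := hb4
    refine ⟨by omega, ?_, ?_⟩
    · calc (0:ℝ) < distNearestInt (ζ ^ 1 * y) := by rw [pow_one]; exact dni_pos hirry
      _ ≤ maxDist 1 ζ y := le_maxDist ζ y (by simp)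
    · apply maxDist_le (Real.rpow_nonneg hy0.le _)
      intro j hj
      have : j = 1 := by simpa using hj
      rw [this, pow_one]
      exact hd
  -- infinitude via finite fibers
  by_contra hni
  rw [Set.not_infinite] at hni
  -- the domain of large elements of T
  have hsmall : {x : ℕ | (x:ℝ) < A}.Finite := by
    apply Set.Finite.subset (Set.finite_Iic (Nat.ceil A))
    intro x hx
    have : (x:ℝ) ≤ (Nat.ceil A : ℝ) := le_trans (le_of_lt hx) (Nat.le_ceil A)
    exact_mod_cast this
  set dom := T \ {x : ℕ | (x:ℝ) < A} with hdomdef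
  have hdom : dom.Infinite := hT.diff hsmall
  -- choice function
  have hex : ∀ x : ℕ, ∃ y : ℕ, x ∈ dom →
      y ∈ S' ∧ 1 ≤ y ∧ distNearestInt (ζ * y) ≤ (y:ℝ) * (x:ℝ) ^ (-η - 1) := by
    intro x
    by_cases hx : x ∈ dom
    · obtain ⟨hxT, hxA⟩ := hx
      have hxA' : A ≤ (x:ℝ) := not_lt.mp hxA
      obtain ⟨y, hy1, hyk, hyd⟩ := hA x hxA' hxT.2.2
      have hx1 : (1:ℝ) ≤ (x:ℝ) := by exact_mod_cast hxT.1
      exact ⟨y, fun _ => ⟨hmem x hx1 y hy1 hyk hyd, hy1, hyd⟩⟩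
    · exact ⟨1, fun h => absurd h hx⟩
  choose f hf using hex
  -- fibers are finite
  have hfib : ∀ y₀ : ℕ, {x : ℕ | x ∈ dom ∧ f x = y₀}.Finite := by
    intro y₀
    rcases Set.eq_empty_or_nonempty {x : ℕ | x ∈ dom ∧ f x = y₀} with he | ⟨x₀, hx₀d, hx₀f⟩
    · rw [he]; exact Set.finite_empty
    · have hp₀ := hf x₀ hx₀d
      rw [hx₀f] at hp₀
      obtain ⟨-, hy₀1, -⟩ := hp₀
      set ε := distNearestInt (ζ * y₀) with hε
      have hεpos : 0 < ε := dni_pos (hirr.mul_natCast (by omega))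
      apply Set.Finite.subset (Set.finite_Iic (Nat.ceil ((y₀:ℝ)/ε)))
      rintro x ⟨hxd, hxf⟩
      have hp := hf x hxd
      rw [hxf] at hp
      obtain ⟨-, -, hdist⟩ := hp
      have hx1 : (1:ℝ) ≤ (x:ℝ) := by exact_mod_cast hxd.1.1
      have hx0 : (0:ℝ) < (x:ℝ) := lt_of_lt_of_le one_pos hx1
      have h2 : (x:ℝ) ^ (-η - 1) ≤ (x:ℝ)⁻¹ := by
        rw [← Real.rpow_neg_one (x:ℝ)]
        exact Real.rpow_le_rpow_of_exponent_le hx1 (by linarith)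
      have hy₀0 : (0:ℝ) < (y₀:ℝ) := by exact_mod_cast hy₀1
      have h3 : ε ≤ (y₀:ℝ) * (x:ℝ)⁻¹ :=
        le_trans hdist (mul_le_mul_of_nonneg_left h2 hy₀0.le)
      have h4 : (x:ℝ) ≤ (y₀:ℝ)/ε := by
        rw [le_div_iff₀ hεpos]
        have hxinv : (x:ℝ) * (x:ℝ)⁻¹ = 1 := mul_inv_cancel₀ hx0.ne'
        nlinarith [h3, hx0]
      have : (x:ℝ) ≤ (Nat.ceil ((y₀:ℝ)/ε) : ℝ) := le_trans h4 (Nat.le_ceil _)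
      exact_mod_cast this
  -- dom is covered by finitely many finite fibers
  have hcover : dom ⊆ ⋃ y₀ ∈ S', {x : ℕ | x ∈ dom ∧ f x = y₀} := by
    intro x hx
    have hp := hf x hx
    exact Set.mem_biUnion hp.1 ⟨hx, rfl⟩
  exact hdom (Set.Finite.subset (Set.Finite.biUnion hni (fun y₀ _ => hfib y₀)) hcover)

lemma le_lambdaConst {k : ℕ} {ζ : ℝ} {η : ℝ}
    (h : {x : ℕ | 0 < x ∧ 0 < maxDist k ζ x ∧ maxDist k ζ x ≤ (x : ℝ) ^ (-η)}.Infinite) :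
    (η : EReal) ≤ lambdaConst k ζ :=
  le_sSup (Set.mem_insert_iff.mpr (Or.inr ⟨η, rfl, h⟩))

lemma lambdaConst_gt {k : ℕ} {ζ : ℝ} (h : 1 < lambdaConst k ζ) :
    ∃ η : ℝ, 1 < η ∧
      {x : ℕ | 0 < x ∧ 0 < maxDist k ζ x ∧ maxDist k ζ x ≤ (x : ℝ) ^ (-η)}.Infinite := by
  rw [lambdaConst, lt_sSup_iff] at h
  obtain ⟨e, he, h1e⟩ := h
  rcases Set.mem_insert_iff.mp he with rfl | ⟨η, rfl, hinf⟩
  · exact absurd h1e (by norm_num)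
  · exact ⟨η, by exact_mod_cast h1e, hinf⟩

theorem stmt5 (ζ : ℝ) (hirr : Irrational ζ) (hfin : lambdaConst 1 ζ < ⊤) :
    {k : ℕ | 0 < k ∧ 1 < lambdaConst k ζ}.Finite := by
  obtain ⟨w, hLw, -⟩ := EReal.exists_between_coe_real hfin
  apply Set.Finite.subset (Set.finite_Iic (Nat.ceil ((w + 1) / 2)))
  rintro k ⟨hk0, hk1⟩
  obtain ⟨η, hη, hTinf⟩ := lambdaConst_gt hk1
  have hS' := infinite_good ζ hirr hk0 hη hTinf
  have hle : ((2 * (k:ℝ) - 1 : ℝ) : EReal) ≤ lambdaConst 1 ζ := le_lambdaConst hS'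
  have hlt : ((2 * (k:ℝ) - 1 : ℝ) : EReal) < (w : EReal) := lt_of_le_of_lt hle hLw
  have hR : 2 * (k:ℝ) - 1 < w := by exact_mod_cast hlt
  have h1 : (k:ℝ) ≤ (w + 1) / 2 := by linarith
  have h2 : (k:ℝ) ≤ (Nat.ceil ((w + 1) / 2) : ℝ) := le_trans h1 (Nat.le_ceil _)
  exact_mod_cast h2
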